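/- For a real number q with 0<q<1, nonnegative integer a, and positive integer n, H_n^*[{2}^a, 1] = ∑_{k=1}^n ((1+q^k)/[k]_q^{2a+1}) · ([n choose k]_q / [n+k choose k]_q) · q^{k^2 + ak}. -/

import Mathlib

open Finset

/-- q-analogue of a natural number: [m]_q = (1-q^m)/(1-q). -/
noncomputable def qnum (q : ℝ) (m : ℕ) : ℝ := (1 - q ^ m) / (1 - q)

/-- q-Pochhammer (q;q)_n = ∏_{k=0}^{n-1} (1 - q^{k+1}). -/
noncomputable def qPoch (q : ℝ) (n : ℕ) : ℝ := ∏ k ∈ Finset.range n, (1 - q ^ (k + 1))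

/-- Gaussian q-binomial coefficient, 0 when m > n. -/
noncomputable def qbinom (q : ℝ) (n m : ℕ) : ℝ :=
  if m ≤ n then qPoch q n / (qPoch q m * qPoch q (n - m)) else 0

/-- q-multiple harmonic star sum H_n^*[s₁,…,s_m]. -/
noncomputable def qHstar (q : ℝ) : List ℕ → ℕ → ℝ
  | [], _ => 1
  | s :: rest, n => ∑ k ∈ Finset.Icc 1 n, q ^ k / qnum q k ^ s * qHstar q rest k

/-- q-multiple zeta star value ζ_q^*[s₁,…,s_m]. -/
noncomputable def qZetaStar (q : ℝ) : List ℕ → ℝ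
  | [] => 1
  | s :: rest => ∑' k : ℕ, q ^ (k + 1) / qnum q (k + 1) ^ s * qHstar q rest (k + 1)

/-- strict multiple harmonic sum ∑_{n ≥ k₁ > … > k_r ≥ 1} ∏ 1/k_j^{p_j}. -/
noncomputable def Hstrict : List ℕ → ℕ → ℝ
  | [], _ => 1
  | p :: rest, n => ∑ k ∈ Finset.Icc 1 n, (1 : ℝ) / (k : ℝ) ^ p * Hstrict rest (k - 1)

/-- binomial-weighted strict multiple harmonic sum Ĥ_n(p). -/
noncomputable def Hhat : List ℕ → ℕ → ℝ
  | [], _ => 1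
  | p :: rest, n => ∑ k ∈ Finset.Icc 1 n,
      ((n.choose k : ℝ) / ((n + k).choose n)) * ((1 : ℝ) / (k : ℝ) ^ p) * Hstrict rest (k - 1)

/-- ordinary multiple harmonic star sum H_n^*(s₁,…,s_m). -/
noncomputable def HstarO : List ℕ → ℕ → ℝ
  | [], _ => 1
  | s :: rest, n => ∑ k ∈ Finset.Icc 1 n, (1 : ℝ) / (k : ℝ) ^ s * HstarO rest k

/-- ordinary multiple zeta star value. -/
noncomputable def zetaStarO : List ℕ → ℝ
  | [] => 1
  | s :: rest => ∑' k : ℕ, (1 : ℝ) / ((k : ℝ) + 1) ^ s * HstarO rest (k + 1)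

/-- Merge a list of parts according to a comma(true)/plus(false) pattern. -/
def mergeComp : ℕ → List ℕ → List Bool → List ℕ
  | a, [], _ => [a]
  | a, _ :: _, [] => [a]
  | a, b :: t, true :: bs => a :: mergeComp b t bs
  | a, b :: t, false :: bs => mergeComp (a + b) t bs


-- auxiliary lemmas
section
variable {q : ℝ} (hq0 : 0 < q) (hq1 : q < 1)
include hq0 hq1

lemma sub_pow_pos {m : ℕ} (hm : 1 ≤ m) : 0 < 1 - q ^ m := by
  have : q ^ m < 1 := pow_lt_one₀ hq0.le hq1 (by omega)
  linarith

lemma qPoch_pos (n : ℕ) : 0 < qPoch q n := by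
  apply Finset.prod_pos; intro k _; exact sub_pow_pos hq0 hq1 (by omega)

lemma qPoch_ne (n : ℕ) : qPoch q n ≠ 0 := (qPoch_pos hq0 hq1 n).ne'

lemma qnum_pos {m : ℕ} (hm : 1 ≤ m) : 0 < qnum q m :=
  div_pos (sub_pow_pos hq0 hq1 hm) (by linarith)

lemma qnum_ne {m : ℕ} (hm : 1 ≤ m) : qnum q m ≠ 0 := (qnum_pos hq0 hq1 hm).ne'

lemma qbinom_div {n k : ℕ} (hk : k ≤ n) :
    qbinom q n k / qbinom q (n + k) k
      = qPoch q n ^ 2 / (qPoch q (n - k) * qPoch q (n + k)) := by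
  have h1 : qbinom q n k = qPoch q n / (qPoch q k * qPoch q (n - k)) := if_pos hk
  have h2 : qbinom q (n + k) k = qPoch q (n + k) / (qPoch q k * qPoch q n) := by
    rw [qbinom, if_pos (by omega : k ≤ n + k), Nat.add_sub_cancel]
  rw [h1, h2]
  have h := qPoch_ne hq0 hq1
  field_simp
  rw [mul_comm (qPoch q n ^ 2), mul_assoc (qPoch q k),
    mul_div_mul_left _ _ (h k)]
end

lemma qPoch_succ (q : ℝ) (n : ℕ) : qPoch q (n+1) = qPoch q n * (1 - q ^ (n+1)) :=
  Finset.prod_range_succ _ _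

lemma frac_helper (C D1 D2 D3 X Y P n1 n2 : ℝ) (hC : C ≠ 0) (hD1 : D1 ≠ 0)
    (hD2 : D2 ≠ 0) (hD3 : D3 ≠ 0)
    (h : X * Y * P * (D1 * D2) = (n1 * D2 - n2 * D1) * D3) :
    X * (Y / C) * (P / D3) = (n1 / D1 - n2 / D2) / C := by
  rw [show X * (Y / C) * (P / D3) = X * Y * P / (C * D3) by ring,
    div_sub_div _ _ hD1 hD2, div_div,
    div_eq_div_iff (mul_ne_zero hC hD3) (mul_ne_zero (mul_ne_zero hD1 hD2) hC)]
  linear_combination C * h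

lemma frac_helper2 (C D1 D3 X Y P n1 : ℝ) (hC : C ≠ 0) (hD1 : D1 ≠ 0) (hD3 : D3 ≠ 0)
    (h : X * Y * P * D1 = n1 * D3) :
    X * (Y / C) * (P / D3) = (n1 / D1 - 0) / C := by
  rw [sub_zero,
    show X * (Y / C) * (P / D3) = X * Y * P / (C * D3) by ring, div_div,
    div_eq_div_iff (mul_ne_zero hC hD3) (mul_ne_zero hD1 hC)]
  linear_combination C * h

noncomputable def uaux (q : ℝ) (N k : ℕ) : ℝ :=
  if k ≤ N then q ^ (k * (k-1)) * qPoch q N ^ 2 / (qPoch q (N - k) * qPoch q (N + k - 1))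
  else 0

section
variable {q : ℝ} (hq0 : 0 < q) (hq1 : q < 1)
include hq0 hq1

lemma sub_pow_ne {m : ℕ} (hm : 1 ≤ m) : (1:ℝ) - q ^ m ≠ 0 :=
  (sub_pow_pos hq0 hq1 hm).ne'

lemma tele {N : ℕ} (hN : 1 ≤ N) :
    ∑ k ∈ Icc 1 N, (1 + q ^ k) * q ^ (k * (k - 1)) * qnum q k *
        (qbinom q N k / qbinom q (N + k) k) = qnum q N := by
  have hP := qPoch_ne hq0 hq1
  have h1q : (1:ℝ) - q ≠ 0 := by nlinarith
  have hterm : ∀ k ∈ Icc 1 N, (1 + q ^ k) * q ^ (k * (k - 1)) * qnum q k *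
      (qbinom q N k / qbinom q (N + k) k) = (uaux q N k - uaux q N (k+1)) / (1 - q) := by
    intro k hk
    simp only [mem_Icc] at hk
    obtain ⟨hk1, hk2⟩ := hk
    rw [qbinom_div hq0 hq1 hk2, qnum]
    obtain ⟨j, rfl⟩ : ∃ j, k = j + 1 := ⟨k - 1, by omega⟩
    simp only [Nat.add_sub_cancel]
    have huk : uaux q N (j+1) = q ^ ((j+1) * j) * qPoch q N ^ 2
        / (qPoch q (N - (j+1)) * qPoch q (N + (j+1) - 1)) := by
      rw [uaux, if_pos hk2, Nat.add_sub_cancel]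
    rcases eq_or_lt_of_le hk2 with rfl | hlt
    · -- k = N
      have huk1 : uaux q (j+1) (j+1+1) = 0 := by rw [uaux, if_neg (by omega)]
      rw [huk, huk1, Nat.sub_self,
        show j + 1 + (j + 1) - 1 = 2*j+1 by omega,
        show j + 1 + (j + 1) = 2*j+1+1 by omega, qPoch_succ q (2*j+1),
        show qPoch q 0 = 1 by simp [qPoch], one_mul, one_mul]
      have hA : (1:ℝ) - q ^ (2*j+1+1) ≠ 0 := sub_pow_ne hq0 hq1 (by omega)
      apply frac_helper2 _ _ _ _ _ _ _ h1q (hP _) (mul_ne_zero (hP _) hA)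
      ring
    · -- k < N
      obtain ⟨m, rfl⟩ : ∃ m, N = (j + 1) + m + 1 := ⟨N - j - 2, by omega⟩
      have huk1 : uaux q (j+1+m+1) (j+1+1) = q ^ ((j+2) * (j+1)) * qPoch q (j+1+m+1) ^ 2
          / (qPoch q m * qPoch q (2*j+m+2+1)) := by
        rw [uaux, if_pos (by omega),
          show j+1+m+1 - (j+1+1) = m by omega,
          show j+1+m+1 + (j+1+1) - 1 = 2*j+m+2+1 by omega, Nat.add_sub_cancel]
      rw [huk, show j+1+m+1 - (j+1) = m+1 by omega,
        show j+1+m+1 + (j+1) - 1 = 2*j+m+2 by omega,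
        show j+1+m+1 + (j+1) = (2*j+m+2)+1 by omega, huk1,
        qPoch_succ q m, qPoch_succ q (2*j+m+2)]
      have hA : (1:ℝ) - q ^ (m+1) ≠ 0 := sub_pow_ne hq0 hq1 (by omega)
      have hB : (1:ℝ) - q ^ (2*j+m+2+1) ≠ 0 := sub_pow_ne hq0 hq1 (by omega)
      apply frac_helper _ _ _ _ _ _ _ _ _ h1q
        (mul_ne_zero (mul_ne_zero (hP m) hA) (hP _))
        (mul_ne_zero (hP m) (mul_ne_zero (hP _) hB))
        (mul_ne_zero (mul_ne_zero (hP m) hA) (mul_ne_zero (hP _) hB))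
      ring
  rw [Finset.sum_congr rfl hterm, ← Finset.sum_div]
  have htel : ∑ k ∈ Icc 1 N, (uaux q N k - uaux q N (k+1)) = uaux q N 1 - uaux q N (N+1) := by
    rw [← Finset.Ico_add_one_right_eq_Icc, Finset.sum_Ico_eq_sum_range,
      show N + 1 - 1 = N from rfl,
      ← Finset.sum_range_sub' (fun i => uaux q N (i+1)) N]
    exact Finset.sum_congr rfl fun i _ => by rw [add_comm 1 i]
  rw [htel]
  have hu1 : uaux q N 1 = 1 - q ^ N := by
    obtain ⟨M, rfl⟩ : ∃ M, N = M + 1 := ⟨N - 1, by omega⟩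
    rw [uaux, if_pos hN, show M + 1 - 1 = M by omega, show M + 1 + 1 - 1 = M + 1 by omega,
      show (1:ℕ) * (1-1) = 0 by omega, pow_zero, one_mul, qPoch_succ q M]
    have hA : (1:ℝ) - q ^ (M+1) ≠ 0 := sub_pow_ne hq0 hq1 (by omega)
    rw [div_eq_iff (mul_ne_zero (hP M) (mul_ne_zero (hP M) hA))]
    ring
  have huN : uaux q N (N+1) = 0 := by rw [uaux, if_neg (by omega)]
  rw [hu1, huN, qnum, sub_zero]
end
lemma core_alg (P Pm P2 A B KK X c x qq : ℝ) (hPm : Pm ≠ 0) (hP2 : P2 ≠ 0) (hA : A ≠ 0)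
    (hB : B ≠ 0) (hKK : KK ≠ 0) (hX : X ≠ 0) (hc : c ≠ 0)
    (h : KK^2 * x = x * (A*B) + qq * X^2) :
    (P*KK)^2 / ((Pm*A) * (P2*B)) * (x / (X/c)^2)
    = P^2/(Pm*P2) * (x / (X/c)^2) + qq / (KK/c)^2 * ((P*KK)^2 / ((Pm*A)*(P2*B))) := by
  field_simp
  linear_combination P^2 * h

section
variable {q : ℝ} (hq0 : 0 < q) (hq1 : q < 1)
include hq0 hq1

lemma core {n k : ℕ} (hk1 : 1 ≤ k) (hk : k ≤ n + 1) :
    qbinom q (n+1) k / qbinom q (n+1+k) k * (q ^ k / qnum q k ^ 2)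
    = qbinom q n k / qbinom q (n+k) k * (q ^ k / qnum q k ^ 2)
      + q ^ (n+1) / qnum q (n+1) ^ 2 * (qbinom q (n+1) k / qbinom q (n+1+k) k) := by
  have hP := qPoch_ne hq0 hq1
  have h1q : (1:ℝ) - q ≠ 0 := by nlinarith
  rcases eq_or_lt_of_le hk with rfl | hlt
  · rw [show qbinom q n (n+1) = 0 from if_neg (by omega), zero_div, zero_mul, zero_add,
      mul_comm]
  · have hk' : k ≤ n := by omega
    rw [qbinom_div hq0 hq1 hk', qbinom_div hq0 hq1 (by omega : k ≤ n+1), qnum, qnum]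
    obtain ⟨m, rfl⟩ : ∃ m, n = k + m := ⟨n - k, by omega⟩
    rw [show k + m + 1 - k = m + 1 by omega, show k + m - k = m by omega,
      show k + m + 1 + k = (k+m+k)+1 by omega,
      qPoch_succ q (k+m), qPoch_succ q m, qPoch_succ q (k+m+k)]
    exact core_alg _ _ _ _ _ _ _ _ _ _ (hP m) (hP (k+m+k))
      (sub_pow_ne hq0 hq1 (by omega)) (sub_pow_ne hq0 hq1 (by omega))
      (sub_pow_ne hq0 hq1 (by omega)) (sub_pow_ne hq0 hq1 hk1) h1q (by ring)
end
lemma qHstar_cons (q : ℝ) (s : ℕ) (rest : List ℕ) (n : ℕ) :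
    qHstar q (s :: rest) (n+1)
    = qHstar q (s :: rest) n + q ^ (n+1) / qnum q (n+1) ^ s * qHstar q rest (n+1) := by
  simp only [qHstar]
  exact Finset.sum_Icc_succ_top (by omega) _

lemma step0_help (u G1 G0 Qk c w x y : ℝ) (hQ : Qk ≠ 0)
    (hcore : G1 * (x / Qk ^ 2) = G0 * (x / Qk ^ 2) + c * G1)
    (hy : y = w * x) :
    u / Qk ^ 1 * G1 * y = u / Qk ^ 1 * G0 * y + c * (u * w * Qk * G1) := by
  have h2 : u / Qk ^ 1 * G1 * y = (u * w * Qk) * (G1 * (x / Qk ^ 2)) := by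
    rw [hy]; field_simp
  have h3 : u / Qk ^ 1 * G0 * y = (u * w * Qk) * (G0 * (x / Qk ^ 2)) := by
    rw [hy]; field_simp
  rw [h2, h3, hcore]; ring

section
variable {q : ℝ} (hq0 : 0 < q) (hq1 : q < 1)
include hq0 hq1

lemma step_term0 {n k : ℕ} (hk1 : 1 ≤ k) (hk : k ≤ n + 1) :
    (1 + q ^ k) / qnum q k ^ (2*0+1) * (qbinom q (n+1) k / qbinom q (n+1+k) k) * q ^ (k^2+0*k)
    = (1 + q ^ k) / qnum q k ^ (2*0+1) * (qbinom q n k / qbinom q (n+k) k) * q ^ (k^2+0*k)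
      + q ^ (n+1) / qnum q (n+1) ^ 2 *
        ((1 + q ^ k) * q ^ (k*(k-1)) * qnum q k * (qbinom q (n+1) k / qbinom q (n+1+k) k)) := by
  have hy : q ^ (k^2+0*k) = q ^ (k*(k-1)) * q ^ k := by
    rw [← pow_add]
    congr 1
    obtain ⟨j, rfl⟩ : ∃ j, k = j + 1 := ⟨k - 1, by omega⟩
    simp only [Nat.add_sub_cancel]
    ring
  exact step0_help _ _ _ _ _ _ _ _ (qnum_ne hq0 hq1 hk1) (core hq0 hq1 hk1 hk) hy

lemma step_term (a : ℕ) {n k : ℕ} (hk1 : 1 ≤ k) (hk : k ≤ n + 1) :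
    (1 + q ^ k) / qnum q k ^ (2*(a+1)+1) * (qbinom q (n+1) k / qbinom q (n+1+k) k) *
        q ^ (k^2+(a+1)*k)
    = (1 + q ^ k) / qnum q k ^ (2*(a+1)+1) * (qbinom q n k / qbinom q (n+k) k) *
        q ^ (k^2+(a+1)*k)
      + q ^ (n+1) / qnum q (n+1) ^ 2 *
        ((1 + q ^ k) / qnum q k ^ (2*a+1) * (qbinom q (n+1) k / qbinom q (n+1+k) k) *
          q ^ (k^2+a*k)) := by
  have hcore := core hq0 hq1 hk1 hk
  have h1 : ∀ G : ℝ, (1 + q ^ k) / qnum q k ^ (2*(a+1)+1) * G * q ^ (k^2+(a+1)*k)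
      = ((1 + q ^ k) / qnum q k ^ (2*a+1) * q ^ (k^2+a*k)) * (G * (q ^ k / qnum q k ^ 2)) := by
    intro G
    rw [show 2*(a+1)+1 = (2*a+1)+2 by ring, pow_add,
      show k^2+(a+1)*k = (k^2+a*k)+k by ring, pow_add]
    ring
  rw [h1, h1, hcore]
  ring
end
section
variable {q : ℝ} (hq0 : 0 < q) (hq1 : q < 1)
include hq0 hq1

lemma top_zero (a n : ℕ) :
    (1 + q ^ (n+1)) / qnum q (n+1) ^ (2*a+1) *
      (qbinom q n (n+1) / qbinom q (n+(n+1)) (n+1)) * q ^ ((n+1)^2+a*(n+1)) = 0 := by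
  rw [show qbinom q n (n+1) = 0 from if_neg (by omega), zero_div, mul_zero, zero_mul]

lemma main_aux (a n : ℕ) :
    qHstar q (List.replicate a 2 ++ [1]) n
    = ∑ k ∈ Finset.Icc 1 n,
        (1 + q ^ k) / qnum q k ^ (2 * a + 1) * (qbinom q n k / qbinom q (n + k) k) *
          q ^ (k ^ 2 + a * k) := by
  induction a generalizing n with
  | zero =>
    induction n with
    | zero => simp [qHstar]
    | succ n ihn =>
      rw [List.replicate, List.nil_append] at ihn ⊢
      rw [qHstar_cons, ihn, pow_one,
        show qHstar q [] (n+1) = 1 from rfl, mul_one]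
      have hsum : ∑ k ∈ Finset.Icc 1 (n+1),
          (1 + q ^ k) / qnum q k ^ (2*0+1) * (qbinom q (n+1) k / qbinom q (n+1+k) k) *
            q ^ (k^2+0*k)
          = (∑ k ∈ Finset.Icc 1 (n+1),
              (1 + q ^ k) / qnum q k ^ (2*0+1) * (qbinom q n k / qbinom q (n+k) k) *
                q ^ (k^2+0*k))
            + q ^ (n+1) / qnum q (n+1) ^ 2 *
              ∑ k ∈ Finset.Icc 1 (n+1), (1 + q ^ k) * q ^ (k*(k-1)) * qnum q k *
                (qbinom q (n+1) k / qbinom q (n+1+k) k) := by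
        rw [Finset.mul_sum, ← Finset.sum_add_distrib]
        apply Finset.sum_congr rfl
        intro k hk
        simp only [Finset.mem_Icc] at hk
        exact step_term0 hq0 hq1 hk.1 hk.2
      rw [hsum, tele hq0 hq1 (by omega), Finset.sum_Icc_succ_top (by omega : 1 ≤ n+1),
        top_zero hq0 hq1 0 n, add_zero]
      congr 1
      rw [sq, ← div_div, div_mul_cancel₀ _ (qnum_ne hq0 hq1 (by omega : 1 ≤ n+1))]
  | succ a iha =>
    induction n with
    | zero => simp [List.replicate, qHstar]
    | succ n ihn =>
      rw [show List.replicate (a+1) 2 ++ [1] = 2 :: (List.replicate a 2 ++ [1]) from by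
          simp [List.replicate]]
      rw [qHstar_cons, ← show List.replicate (a+1) 2 ++ [1] = 2 :: (List.replicate a 2 ++ [1])
          from by simp [List.replicate], ihn, iha]
      have hsum : ∑ k ∈ Finset.Icc 1 (n+1),
          (1 + q ^ k) / qnum q k ^ (2*(a+1)+1) * (qbinom q (n+1) k / qbinom q (n+1+k) k) *
            q ^ (k^2+(a+1)*k)
          = (∑ k ∈ Finset.Icc 1 (n+1),
              (1 + q ^ k) / qnum q k ^ (2*(a+1)+1) * (qbinom q n k / qbinom q (n+k) k) *
                q ^ (k^2+(a+1)*k))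
            + q ^ (n+1) / qnum q (n+1) ^ 2 *
              ∑ k ∈ Finset.Icc 1 (n+1),
                (1 + q ^ k) / qnum q k ^ (2*a+1) * (qbinom q (n+1) k / qbinom q (n+1+k) k) *
                  q ^ (k^2+a*k) := by
        rw [Finset.mul_sum, ← Finset.sum_add_distrib]
        apply Finset.sum_congr rfl
        intro k hk
        simp only [Finset.mem_Icc] at hk
        exact step_term hq0 hq1 a hk.1 hk.2
      rw [Finset.sum_Icc_succ_top (by omega : 1 ≤ n+1)
          (fun k => (1 + q ^ k) / qnum q k ^ (2*(a+1)+1) * (qbinom q n k / qbinom q (n+k) k) *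
            q ^ (k^2+(a+1)*k)),
        top_zero hq0 hq1 (a+1) n, add_zero] at hsum
      rw [hsum]
end

theorem stmt6 (q : ℝ) (hq0 : 0 < q) (hq1 : q < 1) (a n : ℕ) (hn : 1 ≤ n) :
    qHstar q (List.replicate a 2 ++ [1]) n
    = ∑ k ∈ Finset.Icc 1 n,
        (1 + q ^ k) / qnum q k ^ (2 * a + 1) * (qbinom q n k / qbinom q (n + k) k) *
          q ^ (k ^ 2 + a * k) := by
  exact main_aux hq0 hq1 a n
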